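/- Let k be a field of characteristic zero and d a positive integer. Consider the action of GL_d(k) on the polynomial ring k[C^L, C^R], where C^L and C^R are d×d matrices of indeterminates, given by g·C^L = C^L·g and g·C^R = g⁻¹·C^R (i.e., the group acts on the pair of matrix variables by (C^L, C^R) ↦ (C^L g, g⁻¹ C^R)). Then the invariant subring k[C^L,C^R]^{GL_d(k)} is generated as a k-algebra by the d² entries of the matrix product C^L·C^R. -/

import Mathlib

open MvPolynomial

/-- Variables: two `d×d` matrices of indeterminates `C^L` and `C^R`. -/
abbrev CVars (d : ℕ) := (Fin d × Fin d) ⊕ (Fin d × Fin d)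

noncomputable def cL (k : Type*) [CommRing k] (d : ℕ) :
    Matrix (Fin d) (Fin d) (MvPolynomial (CVars d) k) :=
  fun i j => X (Sum.inl (i, j))

noncomputable def cR (k : Type*) [CommRing k] (d : ℕ) :
    Matrix (Fin d) (Fin d) (MvPolynomial (CVars d) k) :=
  fun i j => X (Sum.inr (i, j))

/-- The action of `g ∈ GL_d(k)` on `k[C^L, C^R]` given by `C^L ↦ C^L·g`,
`C^R ↦ g⁻¹·C^R`. -/
noncomputable def glActC (k : Type*) [CommRing k] (d : ℕ) (g : GL (Fin d) k) :
    MvPolynomial (CVars d) k →ₐ[k] MvPolynomial (CVars d) k :=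
  aeval fun v =>
    match v with
    | Sum.inl (i, j) => ∑ r : Fin d,
        X (Sum.inl (i, r)) * C ((g : Matrix (Fin d) (Fin d) k) r j)
    | Sum.inr (i, j) => ∑ r : Fin d,
        C ((↑g⁻¹ : Matrix (Fin d) (Fin d) k) i r) * X (Sum.inr (r, j))

section Aux

variable {k : Type*} [CommRing k] {d : ℕ}

lemma glActC_X_inl (g : GL (Fin d) k) (i j : Fin d) :
    glActC k d g (X (Sum.inl (i, j))) =
      (cL k d * ((g : Matrix (Fin d) (Fin d) k)).map
        (C : k → MvPolynomial (CVars d) k)) i j := by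
  rw [glActC, aeval_X]
  simp [Matrix.mul_apply, Matrix.map_apply, cL]

lemma glActC_X_inr (g : GL (Fin d) k) (i j : Fin d) :
    glActC k d g (X (Sum.inr (i, j))) =
      (((↑g⁻¹ : Matrix (Fin d) (Fin d) k)).map (C : k → MvPolynomial (CVars d) k)
        * cR k d) i j := by
  rw [glActC, aeval_X]
  simp [Matrix.mul_apply, Matrix.map_apply, cR]

lemma glActC_cLcR (g : GL (Fin d) k) (i j : Fin d) :
    glActC k d g ((cL k d * cR k d) i j) = (cL k d * cR k d) i j := by
  have hC : ∀ (M N : Matrix (Fin d) (Fin d) k),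
      (M * N).map (C : k → MvPolynomial (CVars d) k) =
        M.map (C : k → MvPolynomial (CVars d) k) *
        N.map (C : k → MvPolynomial (CVars d) k) := fun M N => by
    ext a b
    simp [Matrix.mul_apply, Matrix.map_apply]
  have key : (cL k d * ((g : Matrix (Fin d) (Fin d) k)).map
        (C : k → MvPolynomial (CVars d) k)) *
      (((↑g⁻¹ : Matrix (Fin d) (Fin d) k)).map (C : k → MvPolynomial (CVars d) k)
        * cR k d) = cL k d * cR k d := by
    rw [mul_assoc, ← mul_assoc (((g : Matrix (Fin d) (Fin d) k)).map _), ← hC]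
    have : (g : Matrix (Fin d) (Fin d) k) * (↑g⁻¹ : Matrix (Fin d) (Fin d) k) = 1 := by
      exact Units.mul_inv g
    rw [this]
    have h1 : (1 : Matrix (Fin d) (Fin d) k).map (C : k → MvPolynomial (CVars d) k) = 1 := by
      ext a b
      simp [Matrix.map_apply, Matrix.one_apply, apply_ite (C : k → MvPolynomial (CVars d) k)]
    rw [h1, one_mul]
  calc glActC k d g ((cL k d * cR k d) i j)
      = ∑ r : Fin d, glActC k d g (X (Sum.inl (i, r))) *
          glActC k d g (X (Sum.inr (r, j))) := by
        rw [Matrix.mul_apply, map_sum]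
        simp [cL, cR]
    _ = ((cL k d * ((g : Matrix (Fin d) (Fin d) k)).map (C : k → MvPolynomial (CVars d) k)) *
        (((↑g⁻¹ : Matrix (Fin d) (Fin d) k)).map (C : k → MvPolynomial (CVars d) k)
          * cR k d)) i j := by
        rw [Matrix.mul_apply]
        exact Finset.sum_congr rfl fun r _ => by rw [glActC_X_inl, glActC_X_inr]
    _ = (cL k d * cR k d) i j := by rw [key]

lemma aeval_phi_mem (F : MvPolynomial (Fin d × Fin d) k) :
    aeval (fun ij : Fin d × Fin d => (cL k d * cR k d) ij.1 ij.2) F ∈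
      Algebra.adjoin k
        {p : MvPolynomial (CVars d) k | ∃ i j, p = (cL k d * cR k d) i j} := by
  induction F using MvPolynomial.induction_on with
  | C a => simpa using Subalgebra.algebraMap_mem (Algebra.adjoin k
        {p : MvPolynomial (CVars d) k | ∃ i j, p = (cL k d * cR k d) i j}) a
  | add p q hp hq => rw [map_add]; exact add_mem hp hq
  | mul_X p v hp =>
      rw [map_mul, aeval_X]
      exact mul_mem hp (Algebra.subset_adjoin ⟨v.1, v.2, rfl⟩)

end Aux

/-- Weyl's first fundamental theorem for `k[V ⊗ V^∨]`: a polynomial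
in `k[C^L, C^R]` is invariant under the `GL_d(k)`-action `(C^L,C^R) ↦ (C^L g, g⁻¹ C^R)`
iff it lies in the `k`-subalgebra generated by the `d²` entries of `C^L·C^R`. -/
theorem stmt10 (k : Type*) [Field k] [CharZero k] (d : ℕ) (hd : 0 < d)
    (f : MvPolynomial (CVars d) k) :
    (∀ g : GL (Fin d) k, glActC k d g f = f) ↔
      f ∈ Algebra.adjoin k
        {p : MvPolynomial (CVars d) k | ∃ i j, p = (cL k d * cR k d) i j} := by
  classical
  constructor
  · -- hard direction
    intro hf
    set φ : Fin d × Fin d → MvPolynomial (CVars d) k :=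
      fun ij => (cL k d * cR k d) ij.1 ij.2 with hφ
    set σf : CVars d → MvPolynomial (Fin d × Fin d) k := fun v =>
      match v with
      | Sum.inl (i, j) => if i = j then 1 else 0
      | Sum.inr (i, j) => X (i, j) with hσf
    set F := aeval σf f with hF
    suffices h : aeval φ F = f by rw [← h]; exact aeval_phi_mem F
    -- the determinant of `cL` is a nonzero polynomial
    have hdet : (cL k d).det ≠ 0 := by
      intro h0
      set y : CVars d → k := fun v => match v with
        | Sum.inl (i, j) => if i = j then (1 : k) else 0
        | Sum.inr _ => 0 with hy
      have h1 : eval y (cL k d).det = 0 := by rw [h0, map_zero]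
      rw [RingHom.map_det (eval y) (cL k d)] at h1
      have h2 : (eval y).mapMatrix (cL k d) = (1 : Matrix (Fin d) (Fin d) k) := by
        ext a b
        simp [RingHom.mapMatrix_apply, Matrix.map_apply, cL, Matrix.one_apply, hy]
      rw [h2, Matrix.det_one] at h1
      exact one_ne_zero h1
    have key : ∀ x : CVars d → k,
        eval x ((cL k d).det * (aeval φ F - f)) = eval x 0 := by
      intro x
      rw [map_zero, map_mul, map_sub]
      set A : Matrix (Fin d) (Fin d) k := Matrix.of fun i j => x (Sum.inl (i, j)) with hA
      set B : Matrix (Fin d) (Fin d) k := Matrix.of fun i j => x (Sum.inr (i, j)) with hB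
      by_cases h0 : A.det = 0
      · have : eval x (cL k d).det = A.det := by
          rw [RingHom.map_det (eval x) (cL k d)]
          congr 1
          ext a b
          simp [RingHom.mapMatrix_apply, Matrix.map_apply, cL, hA]
        rw [this, h0, zero_mul]
      · -- A is invertible
        have hu : IsUnit A := (Matrix.isUnit_iff_isUnit_det A).2 (isUnit_iff_ne_zero.2 h0)
        obtain ⟨u, hu⟩ := hu
        set g : GL (Fin d) k := u⁻¹ with hg
        set τ : CVars d → k := fun v =>
          match v with
          | Sum.inl (i, j) => if i = j then (1 : k) else 0
          | Sum.inr (i, j) => (A * B) i j with hτ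
        -- invariance at the point x gives `eval x f = aeval τ f`
        have hxf : eval x f = aeval τ f := by
          have h1 := congrArg (aeval x : MvPolynomial (CVars d) k →ₐ[k] k) (hf g)
          rw [glActC, comp_aeval_apply] at h1
          have h2 : (fun v : CVars d => (aeval x : MvPolynomial (CVars d) k →ₐ[k] k)
              (match v with
              | Sum.inl (i, j) => ∑ r : Fin d,
                  X (Sum.inl (i, r)) * C ((g : Matrix (Fin d) (Fin d) k) r j)
              | Sum.inr (i, j) => ∑ r : Fin d,
                  C ((↑g⁻¹ : Matrix (Fin d) (Fin d) k) i r) * X (Sum.inr (r, j)))) = τ := by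
            funext v
            rcases v with ⟨i, j⟩ | ⟨i, j⟩
            · have : (∑ r : Fin d, A i r * (g : Matrix (Fin d) (Fin d) k) r j)
                  = (A * (g : Matrix (Fin d) (Fin d) k)) i j := (Matrix.mul_apply).symm
              simp only [map_sum, map_mul, aeval_X, aeval_C, Algebra.algebraMap_self,
                RingHom.id_apply]
              rw [hτ]
              show (∑ r : Fin d, x (Sum.inl (i, r)) * (g : Matrix (Fin d) (Fin d) k) r j)
                  = if i = j then (1 : k) else 0
              have hAg : A * (g : Matrix (Fin d) (Fin d) k) = 1 := by
                rw [hg, ← hu]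
                exact Units.mul_inv u
              calc (∑ r : Fin d, x (Sum.inl (i, r)) * (g : Matrix (Fin d) (Fin d) k) r j)
                  = (A * (g : Matrix (Fin d) (Fin d) k)) i j := by
                    rw [Matrix.mul_apply]; rfl
                _ = (1 : Matrix (Fin d) (Fin d) k) i j := by rw [hAg]
                _ = if i = j then (1 : k) else 0 := Matrix.one_apply
            · simp only [map_sum, map_mul, aeval_X, aeval_C, Algebra.algebraMap_self,
                RingHom.id_apply]
              rw [hτ]
              show (∑ r : Fin d, (↑g⁻¹ : Matrix (Fin d) (Fin d) k) i r * x (Sum.inr (r, j)))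
                  = (A * B) i j
              have hgi : (↑g⁻¹ : Matrix (Fin d) (Fin d) k) = A := by
                rw [hg, inv_inv, hu]
              rw [hgi]
              rw [Matrix.mul_apply]
              rfl
          rw [h2] at h1
          have hx : (aeval x : MvPolynomial (CVars d) k →ₐ[k] k) f = eval x f := by
            rw [← coe_aeval_eq_eval]; rfl
          rw [hx] at h1
          exact h1.symm
        -- the substituted polynomial also evaluates to `aeval τ f`
        have hxF : eval x (aeval φ F) = aeval τ f := by
          have e1 : eval x (aeval φ F) = (aeval x : MvPolynomial (CVars d) k →ₐ[k] k)
              (aeval φ F) := by rw [← coe_aeval_eq_eval]; rfl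
          rw [e1, comp_aeval_apply, hF, comp_aeval_apply]
          refine congrArg (fun y : CVars d → k => (aeval y) f) ?_
          funext v
          rcases v with ⟨i, j⟩ | ⟨i, j⟩
          · rw [hσf]
            show (aeval fun ij : Fin d × Fin d =>
                (aeval x : MvPolynomial (CVars d) k →ₐ[k] k) (φ ij))
                (if i = j then 1 else 0) = τ (Sum.inl (i, j))
            rw [hτ]
            by_cases hij : i = j <;> simp [hij]
          · rw [hσf]
            show (aeval fun ij : Fin d × Fin d =>
                (aeval x : MvPolynomial (CVars d) k →ₐ[k] k) (φ ij))
                (X (i, j)) = τ (Sum.inr (i, j))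
            rw [aeval_X, hτ, hφ]
            show (aeval x : MvPolynomial (CVars d) k →ₐ[k] k) ((cL k d * cR k d) i j)
                = (A * B) i j
            rw [Matrix.mul_apply, map_sum, Matrix.mul_apply]
            exact Finset.sum_congr rfl fun r _ => by
              rw [map_mul]
              simp [cL, cR, hA, hB]
        rw [hxF, hxf, sub_self, mul_zero]
    have hmul : (cL k d).det * (aeval φ F - f) = 0 := MvPolynomial.funext key
    rcases mul_eq_zero.1 hmul with h | h
    · exact absurd h hdet
    · exact sub_eq_zero.1 h
  · -- easy direction
    intro hf g
    induction hf using Algebra.adjoin_induction with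
    | mem p hp =>
        obtain ⟨i, j, rfl⟩ := hp
        exact glActC_cLcR g i j
    | algebraMap r => exact (glActC k d g).commutes r
    | add p q hp hq hp' hq' => rw [map_add, hp', hq']
    | mul p q hp hq hp' hq' => rw [map_mul, hp', hq']
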